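/- Let c > 0. For the system ẋ = 1 - x², ẏ = 2xy, any solution starting at (x₀, c) with -1 < x₀ < 0 reaches the section {y = c, x > 0} at the point (-x₀, c); i.e., the transition map between the sections {y=c, x∈(-1,0)} and {y=c, x∈(0,1)} is x ↦ -x. -/

import Mathlib

/-- Reflection lemma: for ẋ = 1 - x², ẏ = 2xy, a solution starting at (x₀, c)
with -1 < x₀ < 0 which returns to the section {y = c} with x > 0 does so at
the reflected point (-x₀, c). -/
theorem stmt8 (c : ℝ) (hc : 0 < c) (x y : ℝ → ℝ)
    (hx : ∀ t, HasDerivAt x (1 - x t ^ 2) t)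
    (hy : ∀ t, HasDerivAt y (2 * x t * y t) t)
    (x₀ : ℝ) (hx₀ : -1 < x₀) (hx₀' : x₀ < 0)
    (h0x : x 0 = x₀) (h0y : y 0 = c)
    (T : ℝ) (hT : 0 < T) (hTy : y T = c) (hTx : 0 < x T) :
    x T = -x₀ := by
  set F : ℝ → ℝ := fun t => y t * (1 - x t ^ 2) with hF
  have hF' : ∀ t, HasDerivAt F 0 t := by
    intro t
    have h1 : HasDerivAt (fun t => 1 - x t ^ 2) (-(2 * x t * (1 - x t ^ 2))) t := by
      have := ((hx t).fun_pow 2).const_sub 1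
      exact this.congr_deriv (by ring)
    have := (hy t).fun_mul h1
    exact this.congr_deriv (by ring)
  have hconst : F T = F 0 := by
    have : ∀ t, deriv F t = 0 := fun t => (hF' t).deriv
    have hd : Differentiable ℝ F := fun t => (hF' t).differentiableAt
    exact (is_const_of_deriv_eq_zero hd this) T 0
  simp only [hF, h0x, h0y, hTy] at hconst
  have hsq : x T ^ 2 = x₀ ^ 2 := by
    have := mul_left_cancel₀ (ne_of_gt hc) hconst
    nlinarith
  nlinarith [hTx, hx₀']
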